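/- (Shift invariance, Theorem 4.1) Let E be a compact metric space, Ω = E^ℕ, σ the left shift, p a fully supported Borel probability measure on E, f ∈ C(Ω), L_f the Ruelle operator, λ_f = exp(P(f)), and ν ∈ G*(f). Let T : L¹(Ω, ν) → L¹(Ω, ν) be a bounded linear operator such that for every φ ∈ L¹(Ω, ν), (T φ)(x) = ∫_E exp(f(a·x)) φ(a·x) dp(a) for ν-a.e. x. Suppose ξ ∈ (L¹(Ω, ν))** satisfies T** ξ = λ_f ξ. For a Borel set A ⊆ Ω, let Λ_A ∈ (L¹(Ω, ν))* be the functional φ ↦ ∫_A φ dν. Then for every Borel set A, ξ(Λ_{σ^{-1}(A)}) = ξ(Λ_A); in particular the set function μ(A) := ξ(Λ_A) is shift invariant. -/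

import Mathlib

open MeasureTheory Filter Topology NormedSpace
open scoped NNReal ENNReal

noncomputable section

/-- The sequence `(a, x₁, x₂, …)` obtained by prepending `a` to `x`. -/
def cons {E : Type*} (a : E) (x : ℕ → E) : ℕ → E := fun n => Nat.casesOn n a x

/-- The left shift `σ(x₁, x₂, x₃, …) = (x₂, x₃, …)`. -/
def shift {E : Type*} (x : ℕ → E) : ℕ → E := fun n => x (n + 1)

section Aux
set_option linter.unusedSectionVars false
variable {E : Type*} [MetricSpace E] [CompactSpace E] [MeasurableSpace E] [BorelSpace E]

lemma continuous_cons2 : Continuous (fun q : (ℕ → E) × E => cons q.2 q.1) := by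
  apply continuous_pi
  intro n
  cases n with
  | zero => exact continuous_snd
  | succ m => exact (continuous_apply m).comp continuous_fst

lemma key_eigen
    (p : Measure E) [IsProbabilityMeasure p]
    (f : C(ℕ → E, ℝ))
    (T : C(ℕ → E, ℝ) →L[ℝ] C(ℕ → E, ℝ))
    (hT : ∀ (φ : C(ℕ → E, ℝ)) (x : ℕ → E),
      T φ x = ∫ a, Real.exp (f (cons a x)) * φ (cons a x) ∂p)
    (P : ℝ)
    (ν : Measure (ℕ → E)) [IsProbabilityMeasure ν]
    (hν : ∀ φ : C(ℕ → E, ℝ), ∫ x, T φ x ∂ν = Real.exp P * ∫ x, φ x ∂ν)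
    (ψ : (ℕ → E) → ℝ) (hm : StronglyMeasurable ψ) (hi : Integrable ψ ν) :
    ∫ x, (∫ a, Real.exp (f (cons a x)) * ψ (cons a x) ∂p) ∂ν
      = Real.exp P * ∫ x, ψ x ∂ν := by
  set c2 : (ℕ → E) × E → (ℕ → E) := fun q => cons q.2 q.1 with hc2def
  have hc2 : Continuous c2 := continuous_cons2
  set μ₀ : Measure (ℕ → E) := Measure.map c2 (ν.prod p) with hμ₀
  haveI : IsProbabilityMeasure μ₀ := Measure.isProbabilityMeasure_map hc2.measurable.aemeasurable
  set g : (ℕ → E) → ℝ≥0 := fun y => Real.toNNReal (Real.exp (f y)) with hgdef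
  have hgc : Continuous g := continuous_real_toNNReal.comp (Real.continuous_exp.comp f.continuous)
  have hgmeas : Measurable g := hgc.measurable
  have hgcoe : ∀ y, (g y : ℝ) = Real.exp (f y) :=
    fun y => Real.coe_toNNReal _ (Real.exp_nonneg _)
  set m' : Measure (ℕ → E) := μ₀.withDensity (fun y => (g y : ℝ≥0∞)) with hm'
  haveI : IsFiniteMeasure m' := by
    constructor
    rw [hm', withDensity_apply _ MeasurableSet.univ, Measure.restrict_univ]
    calc ∫⁻ y, (g y : ℝ≥0∞) ∂μ₀ ≤ ∫⁻ _, ENNReal.ofReal (Real.exp ‖f‖) ∂μ₀ := by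
          apply lintegral_mono
          intro y
          show (g y : ℝ≥0∞) ≤ ENNReal.ofReal (Real.exp ‖f‖)
          rw [show ((g y : ℝ≥0∞)) = ENNReal.ofReal (Real.exp (f y)) from rfl]
          exact ENNReal.ofReal_le_ofReal
            (Real.exp_le_exp.2 (le_trans (le_abs_self _) (f.norm_coe_le_norm y)))
      _ < ⊤ := by simp
  haveI hfinsmul : IsFiniteMeasure ((ENNReal.ofReal (Real.exp P)) • ν) := by
    constructor
    rw [Measure.smul_apply, smul_eq_mul]
    exact ENNReal.mul_lt_top ENNReal.ofReal_lt_top (measure_lt_top ν _)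
  have hmeq : m' = (ENNReal.ofReal (Real.exp P)) • ν := by
    apply ext_of_forall_lintegral_eq_of_IsFiniteMeasure
    intro F
    have hFc : Continuous (fun y => (F y : ℝ)) := NNReal.continuous_coe.comp F.continuous
    have φ : C(ℕ → E, ℝ) := ⟨fun y => (F y : ℝ), hFc⟩
    have hint1 : Integrable (fun y => (F y : ℝ)) m' :=
      hFc.integrable_of_hasCompactSupport (HasCompactSupport.of_compactSpace _)
    have hint2 : Integrable (fun y => (F y : ℝ)) ((ENNReal.ofReal (Real.exp P)) • ν) :=
      hFc.integrable_of_hasCompactSupport (HasCompactSupport.of_compactSpace _)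
    rw [lintegral_coe_eq_integral _ hint1, lintegral_coe_eq_integral _ hint2]
    congr 1
    have hν' : ∫ x, (T ⟨fun y => (F y : ℝ), hFc⟩) x ∂ν = Real.exp P * ∫ x, (F x : ℝ) ∂ν :=
      hν _
    have hTφ : ∀ x, (T ⟨fun y => (F y : ℝ), hFc⟩) x
        = ∫ a, Real.exp (f (cons a x)) * (F (cons a x) : ℝ) ∂p := hT _
    have hintprod : Integrable (fun q : (ℕ → E) × E => (g (c2 q) : ℝ) • (F (c2 q) : ℝ))
        (ν.prod p) :=
      ((hgc.subtype_val.smul hFc).comp hc2).integrable_of_hasCompactSupport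
        (HasCompactSupport.of_compactSpace _)
    calc ∫ y, (F y : ℝ) ∂m'
        = ∫ y, (g y : ℝ) • (F y : ℝ) ∂μ₀ := integral_withDensity_eq_integral_smul hgmeas _
      _ = ∫ q, (g (c2 q) : ℝ) • (F (c2 q) : ℝ) ∂(ν.prod p) := by
          rw [hμ₀]
          exact integral_map hc2.measurable.aemeasurable
            (hgc.subtype_val.smul hFc).aestronglyMeasurable
      _ = ∫ x, ∫ a, (g (cons a x) : ℝ) • (F (cons a x) : ℝ) ∂p ∂ν := integral_prod _ hintprod
      _ = ∫ x, (T ⟨fun y => (F y : ℝ), hFc⟩) x ∂ν := by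
          apply integral_congr_ae
          filter_upwards with x
          rw [hTφ x]
          apply integral_congr_ae
          filter_upwards with a
          rw [hgcoe, smul_eq_mul]
      _ = Real.exp P * ∫ x, (F x : ℝ) ∂ν := hν'
      _ = ∫ y, (F y : ℝ) ∂((ENNReal.ofReal (Real.exp P)) • ν) := by
          rw [integral_smul_measure, ENNReal.toReal_ofReal (Real.exp_nonneg _), smul_eq_mul]
  have hψm' : Integrable ψ m' := by
    rw [hmeq]; exact hi.smul_measure ENNReal.ofReal_ne_top
  have hψμ₀ : Integrable (fun y => g y • ψ y) μ₀ :=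
    (integrable_withDensity_iff_integrable_smul hgmeas).mp hψm'
  have hsm : StronglyMeasurable (fun y => g y • ψ y) :=
    hgc.subtype_val.stronglyMeasurable.smul hm
  have hintprod : Integrable (fun q : (ℕ → E) × E => g (c2 q) • ψ (c2 q)) (ν.prod p) := by
    rw [hμ₀, integrable_map_measure hsm.aestronglyMeasurable hc2.measurable.aemeasurable]
      at hψμ₀
    exact hψμ₀
  calc ∫ x, (∫ a, Real.exp (f (cons a x)) * ψ (cons a x) ∂p) ∂ν
      = ∫ x, ∫ a, g (cons a x) • ψ (cons a x) ∂p ∂ν := by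
        apply integral_congr_ae; filter_upwards with x
        apply integral_congr_ae; filter_upwards with a
        rw [NNReal.smul_def, hgcoe, smul_eq_mul]
    _ = ∫ q, g (c2 q) • ψ (c2 q) ∂(ν.prod p) := (integral_prod _ hintprod).symm
    _ = ∫ y, g y • ψ y ∂μ₀ := by
        rw [hμ₀]
        exact (integral_map hc2.measurable.aemeasurable
          hsm.aestronglyMeasurable).symm
    _ = ∫ y, ψ y ∂m' := (integral_withDensity_eq_integral_smul hgmeas _).symm
    _ = Real.exp P * ∫ x, ψ x ∂ν := by
        rw [hmeq, integral_smul_measure, ENNReal.toReal_ofReal (Real.exp_nonneg _), smul_eq_mul]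

end Aux

/-- **Shift invariance.** Let `ν ∈ G*(f)`, let `S` be the extension of the
Ruelle operator to `L¹(Ω, ν)` and suppose `ξ ∈ (L¹(Ω, ν))**` satisfies `S** ξ = λ_f ξ`.
If `Λ_A : φ ↦ ∫_A φ dν`, then `ξ(Λ_{σ⁻¹(A)}) = ξ(Λ_A)` for every Borel set `A`; in
particular `A ↦ ξ(Λ_A)` is shift invariant. -/
theorem bidual_eigenvector_gives_invariant_measure
    {E : Type*} [MetricSpace E] [CompactSpace E] [MeasurableSpace E] [BorelSpace E]
    (p : Measure E) [IsProbabilityMeasure p]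
    (hp : ∀ U : Set E, IsOpen U → U.Nonempty → 0 < p U)
    (f : C(ℕ → E, ℝ))
    (T : C(ℕ → E, ℝ) →L[ℝ] C(ℕ → E, ℝ))
    (hT : ∀ (φ : C(ℕ → E, ℝ)) (x : ℕ → E),
      T φ x = ∫ a, Real.exp (f (cons a x)) * φ (cons a x) ∂p)
    (P : ℝ)
    (hP : TendstoUniformly (fun (n : ℕ) (x : ℕ → E) => Real.log ((T ^ n) 1 x) / n)
      (fun _ => P) atTop)
    (ν : Measure (ℕ → E)) [IsProbabilityMeasure ν]
    (hν : ∀ φ : C(ℕ → E, ℝ), ∫ x, T φ x ∂ν = Real.exp P * ∫ x, φ x ∂ν)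
    (S : Lp ℝ 1 ν →L[ℝ] Lp ℝ 1 ν)
    (hS : ∀ φ : Lp ℝ 1 ν, ∀ᵐ x ∂ν,
      S φ x = ∫ a, Real.exp (f (cons a x)) * φ (cons a x) ∂p)
    (ξ : StrongDual ℝ (StrongDual ℝ (Lp ℝ 1 ν)))
    (hξ : ∀ g : StrongDual ℝ (Lp ℝ 1 ν), ξ (g.comp S) = Real.exp P * ξ g) :
    ∀ A : Set (ℕ → E), MeasurableSet A →
      ∀ Λσ ΛA : StrongDual ℝ (Lp ℝ 1 ν),
        (∀ φ : Lp ℝ 1 ν, Λσ φ = ∫ x in shift ⁻¹' A, φ x ∂ν) →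
        (∀ φ : Lp ℝ 1 ν, ΛA φ = ∫ x in A, φ x ∂ν) →
        ξ Λσ = ξ ΛA := by
  intro A hA Λσ ΛA hΛσ hΛA
  have hshift : Measurable (shift : (ℕ → E) → ℕ → E) :=
    measurable_pi_lambda _ fun n => measurable_pi_apply (n + 1)
  have hA' : MeasurableSet (shift ⁻¹' A) := hshift hA
  have hcomp : ΛA.comp S = Real.exp P • Λσ := by
    apply ContinuousLinearMap.ext
    intro φ
    have hφm : StronglyMeasurable (⇑φ : (ℕ → E) → ℝ) := Lp.stronglyMeasurable φ
    have hφi : Integrable (⇑φ) ν := L1.integrable_coeFn φ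
    set ψ : (ℕ → E) → ℝ := (shift ⁻¹' A).indicator ⇑φ with hψdef
    have hψm : StronglyMeasurable ψ := hφm.indicator hA'
    have hψi : Integrable ψ ν := hφi.indicator hA'
    have step2 : ∫ x in A, (S φ) x ∂ν
        = ∫ x in A, (∫ a, Real.exp (f (cons a x)) * φ (cons a x) ∂p) ∂ν := by
      apply setIntegral_congr_ae hA
      filter_upwards [hS φ] with x hx _ using hx
    have step3 : ∫ x in A, (∫ a, Real.exp (f (cons a x)) * φ (cons a x) ∂p) ∂ν
        = ∫ x, (∫ a, Real.exp (f (cons a x)) * ψ (cons a x) ∂p) ∂ν := by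
      rw [← integral_indicator hA]
      apply integral_congr_ae; filter_upwards with x
      by_cases hx : x ∈ A
      · rw [Set.indicator_of_mem hx]
        apply integral_congr_ae; filter_upwards with a
        rw [hψdef, Set.indicator_of_mem (show cons a x ∈ shift ⁻¹' A from hx)]
      · rw [Set.indicator_of_notMem hx]
        have hz : ∀ a, Real.exp (f (cons a x)) * ψ (cons a x) = 0 := by
          intro a
          rw [hψdef, Set.indicator_of_notMem (show cons a x ∉ shift ⁻¹' A from hx), mul_zero]
        symm
        simp only [hz, integral_zero]
    have step4 := key_eigen p f T hT P ν hν ψ hψm hψi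
    have step5 : ∫ x, ψ x ∂ν = ∫ x in shift ⁻¹' A, φ x ∂ν := integral_indicator hA'
    show ΛA (S φ) = (Real.exp P • Λσ) φ
    rw [hΛA (S φ), step2, step3, step4, step5, ← hΛσ φ]
    simp [ContinuousLinearMap.smul_apply]
  have h1 : ξ (ΛA.comp S) = Real.exp P * ξ ΛA := hξ ΛA
  rw [hcomp, _root_.map_smul, smul_eq_mul] at h1
  exact mul_left_cancel₀ (Real.exp_ne_zero P) h1
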